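/- Let A be a real symmetric n×n matrix, M a real symmetric invertible n×n matrix, N := M − A, H := M⁻¹N, and for ℓ ≥ 1 let C^(ℓ) := ∑_{i=0}^{ℓ−1} Hⁱ M⁻¹. Let ρ(H) denote the spectral radius of H (the supremum of the moduli of the elements of the spectrum of H viewed as a complex matrix). Then every eigenvalue μ of C^(ℓ)·A (an element of the spectrum of C^(ℓ)·A viewed as a complex matrix) satisfies |1 − μ| ≤ ρ(H)^ℓ. -/

import Mathlib

open Matrix Pointwise

theorem stmt_10 {n : ℕ} (A M : Matrix (Fin n) (Fin n) ℝ)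
    (hA : Aᵀ = A) (hM : Mᵀ = M) (hMinv : IsUnit M)
    (ℓ : ℕ) (hℓ : 1 ≤ ℓ) :
    ∀ μ ∈ spectrum ℂ
        ((((∑ i ∈ Finset.range ℓ, (M⁻¹ * (M - A)) ^ i) * M⁻¹) * A).map Complex.ofReal),
      ‖1 - μ‖ ≤
        (sSup ((fun z : ℂ => ‖z‖) '' spectrum ℂ ((M⁻¹ * (M - A)).map Complex.ofReal))) ^ ℓ := by
  intro μ hμ
  set H : Matrix (Fin n) (Fin n) ℝ := M⁻¹ * (M - A) with hH
  have hinv : M⁻¹ * M = 1 := Matrix.nonsing_inv_mul M (Matrix.isUnit_iff_isUnit_det M |>.mp hMinv)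
  have hMA : M⁻¹ * A = 1 - H := by
    rw [hH, Matrix.mul_sub, hinv, sub_sub_cancel]
  have key : (∑ i ∈ Finset.range ℓ, H ^ i) * M⁻¹ * A = 1 - H ^ ℓ := by
    rw [Matrix.mul_assoc, hMA]
    rw [← neg_sub H 1, mul_neg, geom_sum_mul, neg_sub]
  rw [key] at hμ
  have hmap : ((1 : Matrix (Fin n) (Fin n) ℝ) - H ^ ℓ).map (Complex.ofReal) =
      1 - (H.map Complex.ofReal) ^ ℓ := by
    have h1 := map_sub Complex.ofRealHom.mapMatrix 1 (H ^ ℓ)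
    have h2 := map_pow Complex.ofRealHom.mapMatrix H ℓ
    have h3 := _root_.map_one (Complex.ofRealHom.mapMatrix (m := Fin n))
    simp only [RingHom.mapMatrix_apply] at h1 h2 h3
    rw [show Complex.ofReal = ⇑Complex.ofRealHom from rfl, h1, h2, h3]
  rw [hmap] at hμ
  set Y := H.map Complex.ofReal with hY
  -- 1 - μ ∈ spectrum Y^ℓ
  have h1 : (1 : ℂ) - μ ∈ spectrum ℂ (Y ^ ℓ) := by
    have : μ ∈ ({1} : Set ℂ) - spectrum ℂ (Y ^ ℓ) := by
      rw [spectrum.singleton_sub_eq]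
      simpa using hμ
    obtain ⟨a, ha, b, hb, hab⟩ := this
    simp only [Set.mem_singleton_iff] at ha
    subst ha
    have : (1:ℂ) - μ = b := by rw [← hab]; ring
    rwa [this]
  rw [spectrum.map_pow_of_pos Y (Nat.lt_of_lt_of_le Nat.zero_lt_one hℓ)] at h1
  obtain ⟨ν, hν, hνℓ⟩ := h1
  rw [← hνℓ, norm_pow]
  apply pow_le_pow_left₀ (norm_nonneg ν)
  apply le_csSup
  · exact ((Matrix.finite_spectrum Y).image _).bddAbove
  · exact ⟨ν, hν, rfl⟩
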